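/- Let λ ≠ 0 be a real constant and let ψ, ψ* : ℝ² → ℝ be C² functions satisfying the Bäcklund system ∂_u((ψ + ψ*)/2) = (1/λ) sin((ψ − ψ*)/2) and ∂_v((ψ − ψ*)/2) = λ sin((ψ + ψ*)/2). Then both ψ and ψ* satisfy the sine-Gordon equation: ∂²ψ/∂u∂v = sin ψ and ∂²ψ*/∂u∂v = sin ψ*. -/

import Mathlib

noncomputable section

/-- Partial derivative of a scalar function in the first (`u`) coordinate direction. -/
def du1 (g : ℝ × ℝ → ℝ) (p : ℝ × ℝ) : ℝ := fderiv ℝ g p (1, 0)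

/-- Partial derivative of a scalar function in the second (`v`) coordinate direction. -/
def dv1 (g : ℝ × ℝ → ℝ) (p : ℝ × ℝ) : ℝ := fderiv ℝ g p (0, 1)

lemma pd_mul_sin (c : ℝ) (w : ℝ × ℝ → ℝ) (hw : Differentiable ℝ w) (p e : ℝ × ℝ) :
    fderiv ℝ (fun q => c * Real.sin (w q)) p e = c * Real.cos (w p) * fderiv ℝ w p e := by
  have h : HasFDerivAt (fun q => Real.sin (w q)) (Real.cos (w p) • fderiv ℝ w p) p :=
    (Real.hasDerivAt_sin (w p)).comp_hasFDerivAt p (hw p).hasFDerivAt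
  have h2 := h.const_mul c
  rw [h2.fderiv]
  simp [mul_assoc]

lemma snd_fderiv_apply (g : ℝ × ℝ → ℝ) (hg : ContDiff ℝ 2 g) (p e e' : ℝ × ℝ) :
    fderiv ℝ (fun q => fderiv ℝ g q e) p e' = fderiv ℝ (fderiv ℝ g) p e' e := by
  have hd : DifferentiableAt ℝ (fderiv ℝ g) p := by
    have : ContDiff ℝ 1 (fderiv ℝ g) := hg.fderiv_right (by norm_num)
    exact (this.differentiable one_ne_zero) p
  rw [fderiv_clm_apply hd (differentiableAt_const e)]
  simp

lemma mixed_symm (g : ℝ × ℝ → ℝ) (hg : ContDiff ℝ 2 g) (p : ℝ × ℝ) :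
    dv1 (du1 g) p = du1 (dv1 g) p := by
  have hs : IsSymmSndFDerivAt ℝ g p := (hg.contDiffAt).isSymmSndFDerivAt (by simp)
  unfold du1 dv1
  rw [snd_fderiv_apply g hg, snd_fderiv_apply g hg]
  exact hs _ _

/-- If `ψ` and `ψ*` are related by the Bäcklund transformation with parameter `λ ≠ 0`,
then both satisfy the sine-Gordon equation `ψ_uv = sin ψ`. -/
theorem backlund_gives_sineGordon (lam : ℝ) (hlam : lam ≠ 0)
    (ψ ψs : ℝ × ℝ → ℝ) (hψ : ContDiff ℝ 2 ψ) (hψs : ContDiff ℝ 2 ψs)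
    (h1 : ∀ p : ℝ × ℝ,
      du1 (fun q => (ψ q + ψs q) / 2) p = (1 / lam) * Real.sin ((ψ p - ψs p) / 2))
    (h2 : ∀ p : ℝ × ℝ,
      dv1 (fun q => (ψ q - ψs q) / 2) p = lam * Real.sin ((ψ p + ψs p) / 2)) :
    ∀ p : ℝ × ℝ, dv1 (du1 ψ) p = Real.sin (ψ p) ∧ dv1 (du1 ψs) p = Real.sin (ψs p) := by
  intro p
  set a : ℝ × ℝ → ℝ := fun q => (ψ q + ψs q) / 2 with ha_def
  set b : ℝ × ℝ → ℝ := fun q => (ψ q - ψs q) / 2 with hb_def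
  have hac : ContDiff ℝ 2 a := (hψ.add hψs).div_const 2
  have hbc : ContDiff ℝ 2 b := (hψ.sub hψs).div_const 2
  have had : Differentiable ℝ a := hac.differentiable (by norm_num)
  have hbd : Differentiable ℝ b := hbc.differentiable (by norm_num)
  -- rewrite hypotheses as function equalities
  have h1' : du1 a = fun q => (1 / lam) * Real.sin (b q) := funext fun q => h1 q
  have h2' : dv1 b = fun q => lam * Real.sin (a q) := funext fun q => h2 q
  -- mixed partial of a
  have hA : dv1 (du1 a) p = Real.cos (b p) * Real.sin (a p) := by
    rw [h1']
    unfold dv1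
    rw [pd_mul_sin _ _ hbd]
    have := h2 p
    unfold dv1 at this
    rw [this]
    field_simp
    ring
  -- mixed partial of b
  have hB : dv1 (du1 b) p = Real.cos (a p) * Real.sin (b p) := by
    rw [mixed_symm b hbc, h2']
    unfold du1
    rw [pd_mul_sin _ _ had]
    have := h1 p
    unfold du1 at this
    rw [this]
    field_simp
    ring
  -- differentiability of first partials
  have hda : Differentiable ℝ (du1 a) := by
    rw [h1']
    exact (Real.differentiable_sin.comp hbd).const_mul _
  have hdb : Differentiable ℝ (du1 b) := by
    have : ContDiff ℝ 1 (fderiv ℝ b) := hbc.fderiv_right (by norm_num)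
    exact (this.differentiable one_ne_zero).clm_apply (differentiable_const _)
  -- decompose ψ and ψs
  have hψa : ∀ q, ψ q = a q + b q := by intro q; simp [ha_def, hb_def]; ring
  have hψsa : ∀ q, ψs q = a q - b q := by intro q; simp [ha_def, hb_def]; ring
  have hduψ : du1 ψ = fun q => du1 a q + du1 b q := by
    funext q
    unfold du1
    have : ψ = fun q => a q + b q := funext hψa
    rw [this, fderiv_fun_add (had q) (hbd q)]
    simp
  have hduψs : du1 ψs = fun q => du1 a q - du1 b q := by
    funext q
    unfold du1
    have : ψs = fun q => a q - b q := funext hψsa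
    rw [this, fderiv_fun_sub (had q) (hbd q)]
    simp
  constructor
  · rw [hduψ]
    unfold dv1
    rw [fderiv_fun_add (hda p) (hdb p)]
    have e1 := hA; have e2 := hB
    unfold dv1 at e1 e2
    simp only [ContinuousLinearMap.add_apply]
    rw [e1, e2, hψa p, Real.sin_add]
    ring
  · rw [hduψs]
    unfold dv1
    rw [fderiv_fun_sub (hda p) (hdb p)]
    have e1 := hA; have e2 := hB
    unfold dv1 at e1 e2
    simp only [ContinuousLinearMap.sub_apply]
    rw [e1, e2, hψsa p, Real.sin_sub]
    ring
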